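/- Let F be a real quadratic field with O_F = Z + Zθ, and let C, N be coprime positive integers with every prime factor of NC split in F, N·O_F = 𝔑·𝔑̄ with (𝔑,𝔑̄)=1 and C·O_F = 𝔠·𝔠̄ with (𝔠,𝔠̄)=1. With the embedding Ψ : F → M₂(Q), Ψ(θ) = [[Tr θ, −N θ],[1,0]], and the adelic element ς^{(C)} ∈ GL₂(A_f) constructed from the matrices ς_q = δ⁻¹[[θ̄, θ],[1,1]] at split primes q (for a chosen prime 𝔮 over q) and ς_q^{(C)} = [[C,−1],[0,1]] at primes dividing C, the embedding Ψ is an optimal embedding of the order O_C = Z + C·O_F into the Eichler order R_N := M₂(Q) ∩ ς^{(C)} M₂(Ẑ) (ς^{(C)})⁻¹ of level N; that is, Ψ⁻¹(R_N) ∩ F = O_C. -/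

import Mathlib

open Matrix

noncomputable section

/-- The local matrix `ς_q` (up to the scalar `δ⁻¹`, which is irrelevant for
conjugation): `[[θ̄, θ],[1,1]]` with `θ ↦ (T-r)/2`, `θ̄ ↦ (T+r)/2` for a chosen square
root `r` of the discriminant `T² - 4N` in `ℚ_q`. -/
def splitMat {q : ℕ} [Fact q.Prime] (T : ℚ) (r : ℚ_[q]) : Matrix (Fin 2) (Fin 2) ℚ_[q] :=
  !![((T : ℚ_[q]) + r) / 2, ((T : ℚ_[q]) - r) / 2; 1, 1]

/-- The extra local matrix `ς_q^{(C)} = [[C, -1],[0,1]]` at primes dividing `C`. -/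
def cMat (q : ℕ) [Fact q.Prime] (C : ℕ) : Matrix (Fin 2) (Fin 2) ℚ_[q] :=
  !![(C : ℚ_[q]), -1; 0, 1]

/-- A `2×2` matrix over `ℚ_q` lies in `M₂(ℤ_q)`, i.e. all entries have norm `≤ 1`. -/
def isIntegralMat {q : ℕ} [Fact q.Prime] (A : Matrix (Fin 2) (Fin 2) ℚ_[q]) : Prop :=
  ∀ i j, ‖A i j‖ ≤ 1

section Helpers

variable {q : ℕ} [hq : Fact q.Prime]

lemma norm_ratint_le_one (m : ℤ) : ‖((m : ℚ) : ℚ_[q])‖ ≤ 1 := by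
  rw [show ((m:ℚ) : ℚ_[q]) = (m : ℚ_[q]) by push_cast; ring]
  exact Padic.norm_int_le_one m

lemma norm_le_inv_of_lt_one {x : ℚ_[q]} (hx : x ≠ 0) (h : ‖x‖ < 1) :
    ‖x‖ ≤ (q : ℝ) ^ (-1 : ℤ) := by
  rw [Padic.norm_eq_zpow_neg_valuation hx] at h ⊢
  have hq1 : (1:ℝ) < (q:ℝ) := by exact_mod_cast hq.out.one_lt
  have : -x.valuation < 0 := by
    by_contra hcon
    push_neg at hcon
    have h2 := zpow_le_zpow_right₀ hq1.le hcon
    rw [zpow_zero] at h2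
    linarith
  exact zpow_le_zpow_right₀ hq1.le (by omega)

lemma rat_is_int_of_norms (u : ℚ)
    (h : ∀ (q : ℕ) (_ : Fact q.Prime), ‖(u : ℚ_[q])‖ ≤ 1) : ∃ a : ℤ, u = a := by
  refine ⟨u.num, ?_⟩
  have hden : u.den = 1 := by
    by_contra hd
    have h2 : 2 ≤ u.den := by
      have := u.den_pos; omega
    set p := u.den.minFac with hp
    have hpp : p.Prime := Nat.minFac_prime (by omega)
    haveI : Fact p.Prime := ⟨hpp⟩
    have hpd : p ∣ u.den := Nat.minFac_dvd _
    have hnum : ((u.num : ℚ) : ℚ_[p]) = (u : ℚ_[p]) * ((u.den : ℚ) : ℚ_[p]) := by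
      rw [← Rat.cast_mul]
      norm_cast
      rw [Rat.mul_den_eq_num]
    have hden_lt : ‖((u.den : ℚ) : ℚ_[p])‖ < 1 := by
      rw [show ((u.den:ℚ) : ℚ_[p]) = ((u.den : ℤ) : ℚ_[p]) by push_cast; ring]
      rw [Padic.norm_intCast_lt_one_iff]
      exact_mod_cast hpd
    have hnum_lt : ‖((u.num : ℚ) : ℚ_[p])‖ < 1 := by
      rw [hnum, Padic.padicNormE.mul]
      calc ‖(u : ℚ_[p])‖ * ‖((u.den : ℚ) : ℚ_[p])‖ ≤ 1 * ‖((u.den : ℚ) : ℚ_[p])‖ := by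
            apply mul_le_mul_of_nonneg_right (h p ⟨hpp⟩) (norm_nonneg _)
        _ < 1 := by rwa [one_mul]
    rw [show ((u.num:ℚ) : ℚ_[p]) = ((u.num : ℤ) : ℚ_[p]) by push_cast; ring] at hnum_lt
    rw [Padic.norm_intCast_lt_one_iff] at hnum_lt
    have h1 : p ∣ u.num.natAbs := by
      have := Int.natAbs_dvd_natAbs.mpr hnum_lt
      simpa using this
    have hg : p ∣ Nat.gcd u.num.natAbs u.den := Nat.dvd_gcd h1 hpd
    rw [Nat.Coprime.gcd_eq_one u.reduced] at hg
    have := hpp.two_le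
    have := Nat.le_of_dvd one_pos hg
    omega
  exact_mod_cast (Rat.den_eq_one_iff u).mp hden |>.symm

lemma quad_norm_le_one {t n w : ℚ_[q]} (ht : ‖t‖ ≤ 1) (hn : ‖n‖ ≤ 1)
    (hw : w^2 = t*w - n) : ‖w‖ ≤ 1 := by
  by_contra hcon
  push_neg at hcon
  have h1 : ‖w^2‖ = ‖w‖^2 := by rw [norm_pow]
  have h2 : ‖t*w - n‖ ≤ max (‖t‖*‖w‖) ‖n‖ := by
    calc ‖t*w - n‖ = ‖t*w + (-n)‖ := by ring_nf
      _ ≤ max ‖t*w‖ ‖-n‖ := Padic.nonarchimedean _ _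
      _ = max (‖t‖*‖w‖) ‖n‖ := by rw [Padic.padicNormE.mul, norm_neg]
  have h3 : max (‖t‖*‖w‖) ‖n‖ ≤ ‖w‖ := by
    apply max_le
    · nlinarith [norm_nonneg w]
    · linarith
  rw [hw] at h1
  nlinarith [norm_nonneg w]

lemma root_le_one {r x : ℚ_[q]} (hx : ‖x‖ ≤ 1) (h : r^2 = x) : ‖r‖ ≤ 1 := by
  have h1 : ‖r‖^2 ≤ 1 := by rw [← norm_pow, h]; exact hx
  nlinarith [norm_nonneg r]

lemma map_fin_two {α β : Type*} (f : α → β) (a b c d : α) :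
    (!![a, b; c, d]).map f = !![f a, f b; f c, f d] := by
  ext i j
  fin_cases i <;> fin_cases j <;> simp

lemma isIntegralMat_explicit {a b c d : ℚ_[q]} :
    isIntegralMat !![a, b; c, d] ↔ ‖a‖ ≤ 1 ∧ ‖b‖ ≤ 1 ∧ ‖c‖ ≤ 1 ∧ ‖d‖ ≤ 1 := by
  constructor
  · intro h
    exact ⟨h 0 0, h 0 1, h 1 0, h 1 1⟩
  · rintro ⟨h1, h2, h3, h4⟩ i j
    fin_cases i <;> fin_cases j <;> simpa

lemma splitMat_det (T : ℚ) (r : ℚ_[q]) : (splitMat T r).det = r := by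
  simp [splitMat, Matrix.det_fin_two_of]
  ring

lemma conj_split_eq (T : ℚ) (r u v n : ℚ_[q]) (hr : r ≠ 0)
    (h : r^2 = ((T : ℚ_[q]))^2 - 4*n) :
    (splitMat T r)⁻¹ * !![u + v*(T : ℚ_[q]), -(v*n); v, u] * splitMat T r =
      !![u + v*(((T : ℚ_[q])+r)/2), 0; 0, u + v*(((T : ℚ_[q])-r)/2)] := by
  have hdet : IsUnit (splitMat T r).det := by
    rw [splitMat_det]; exact isUnit_iff_ne_zero.mpr hr
  have key : !![u + v*(T : ℚ_[q]), -(v*n); v, u] * splitMat T r =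
      splitMat T r * !![u + v*(((T : ℚ_[q])+r)/2), 0; 0, u + v*(((T : ℚ_[q])-r)/2)] := by
    unfold splitMat
    ext i j
    fin_cases i <;> fin_cases j <;>
      simp [Matrix.mul_apply, Fin.sum_univ_two] <;>
      first
        | linear_combination (v/2) * h
        | linear_combination (v/4) * h
        | linear_combination (-(v/2)) * h
        | linear_combination (-(v/4)) * h
        | ring
  rw [Matrix.mul_assoc, key, ← Matrix.mul_assoc, Matrix.nonsing_inv_mul _ hdet, Matrix.one_mul]

lemma conj_c_eq (T : ℚ) (C : ℕ) (r u v n : ℚ_[q]) (hr : r ≠ 0) (hC : (C : ℚ_[q]) ≠ 0)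
    (h : r^2 = ((T : ℚ_[q]))^2 - 4*n) :
    (splitMat T r * cMat q C)⁻¹ * !![u + v*(T : ℚ_[q]), -(v*n); v, u] * (splitMat T r * cMat q C) =
      !![u + v*(((T : ℚ_[q])+r)/2), -(v*r)/C; 0, u + v*(((T : ℚ_[q])-r)/2)] := by
  have hdetC : IsUnit (cMat q C).det := by
    simp [cMat, Matrix.det_fin_two_of]
    exact_mod_cast hC
  have key2 : !![u + v*(((T : ℚ_[q])+r)/2), 0; 0, u + v*(((T : ℚ_[q])-r)/2)] * cMat q C =
      cMat q C * !![u + v*(((T : ℚ_[q])+r)/2), -(v*r)/C; 0, u + v*(((T : ℚ_[q])-r)/2)] := by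
    unfold cMat
    ext i j
    fin_cases i <;> fin_cases j <;>
      simp [Matrix.mul_apply, Fin.sum_univ_two] <;>
      field_simp <;> ring
  rw [Matrix.mul_inv_rev]
  calc (cMat q C)⁻¹ * (splitMat T r)⁻¹ * !![u + v*(T : ℚ_[q]), -(v*n); v, u] *
        (splitMat T r * cMat q C)
      = (cMat q C)⁻¹ * ((splitMat T r)⁻¹ * !![u + v*(T : ℚ_[q]), -(v*n); v, u] * splitMat T r) *
        cMat q C := by
        rw [Matrix.mul_assoc, Matrix.mul_assoc, Matrix.mul_assoc, Matrix.mul_assoc,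
          Matrix.mul_assoc]
    _ = (cMat q C)⁻¹ * (!![u + v*(((T : ℚ_[q])+r)/2), 0; 0, u + v*(((T : ℚ_[q])-r)/2)] * cMat q C) := by
        rw [conj_split_eq T r u v n hr h, Matrix.mul_assoc]
    _ = _ := by
        rw [key2, ← Matrix.mul_assoc, Matrix.nonsing_inv_mul _ hdetC, Matrix.one_mul]

lemma norm_add_mul_le_one {a b w : ℚ_[q]} (ha : ‖a‖ ≤ 1) (hb : ‖b‖ ≤ 1) (hw : ‖w‖ ≤ 1) :
    ‖a + b*w‖ ≤ 1 := by
  refine le_trans (Padic.nonarchimedean _ _) (max_le ha ?_)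
  rw [Padic.padicNormE.mul]
  exact mul_le_one₀ hb (norm_nonneg w) hw

lemma norm_sub_le_max (a b : ℚ_[q]) : ‖a - b‖ ≤ max ‖a‖ ‖b‖ := by
  rw [sub_eq_add_neg]
  refine le_trans (Padic.nonarchimedean _ _) ?_
  rw [norm_neg]

lemma theta_plus_norm {T n r : ℚ_[q]} (hT : ‖T‖ ≤ 1) (hn : ‖n‖ ≤ 1) (h : r^2 = T^2 - 4*n) :
    ‖(T + r)/2‖ ≤ 1 :=
  quad_norm_le_one hT hn (by linear_combination h/4)

lemma theta_minus_norm {T n r : ℚ_[q]} (hT : ‖T‖ ≤ 1) (hn : ‖n‖ ≤ 1) (h : r^2 = T^2 - 4*n) :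
    ‖(T - r)/2‖ ≤ 1 :=
  quad_norm_le_one hT hn (by linear_combination h/4)

end Helpers

open Polynomial in
lemma root_norm_eq_one {F : Type*} [Field F] [Algebra ℚ F] (θ : F) (t n : ℤ)
    (hθ : ∀ c : ℚ, θ ≠ algebraMap ℚ F c)
    (hquad : θ^2 - (t : F)*θ + (n : F) = 0)
    (hOF : ∀ y : F, IsIntegral ℤ y ↔ ∃ a b : ℤ, y = (a : F) + (b : F) * θ)
    (hΔ : t^2 - 4*n ≠ 0)
    (q : ℕ) [hq : Fact q.Prime] (r : ℚ_[q]) (hr : r^2 = ((t : ℚ_[q])^2 - 4*(n : ℚ_[q]))) :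
    ‖r‖ = 1 := by
  haveI : CharZero F := charZero_of_injective_algebraMap (algebraMap ℚ F).injective
  have hq1R : (1:ℝ) < (q:ℝ) := by exact_mod_cast hq.out.one_lt
  have hΔq : r^2 = ((t^2 - 4*n : ℤ) : ℚ_[q]) := by push_cast; exact hr
  have r0 : r ≠ 0 := by
    intro h0
    rw [h0] at hΔq
    have : ((t^2 - 4*n : ℤ) : ℚ_[q]) = 0 := by rw [← hΔq]; ring
    exact hΔ (by exact_mod_cast this)
  have hle : ‖r‖ ≤ 1 := by
    have h1 : ‖r‖^2 ≤ 1 := by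
      rw [← norm_pow, hΔq]
      exact Padic.norm_int_le_one _
    nlinarith [norm_nonneg r]
  by_contra hne
  have hlt : ‖r‖ < 1 := lt_of_le_of_ne hle hne
  have hr1 : ‖r‖ ≤ (q:ℝ)^(-1 : ℤ) := norm_le_inv_of_lt_one r0 hlt
  -- approximate r by an integer mod q^4
  set R : ℤ_[q] := ⟨r, hle⟩ with hR
  set s₀ : ℕ := R.appr 4 with hs₀def
  have hclose0 : ‖(s₀ : ℚ_[q]) - r‖ ≤ (q:ℝ)^(-4 : ℤ) := by
    have h1 : ‖R - (s₀ : ℤ_[q])‖ ≤ (q:ℝ)^(-(4:ℕ) : ℤ) :=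
      (PadicInt.norm_le_pow_iff_mem_span_pow _ _).mpr (R.appr_spec 4)
    have h2 : ((R - (s₀ : ℤ_[q]) : ℤ_[q]) : ℚ_[q]) = r - (s₀ : ℚ_[q]) := by rw [PadicInt.coe_sub, PadicInt.coe_natCast]
    rw [← norm_neg]
    have : -((s₀ : ℚ_[q]) - r) = ((R - (s₀ : ℤ_[q]) : ℤ_[q]) : ℚ_[q]) := by rw [h2]; ring
    rw [this]
    exact_mod_cast h1
  -- q divides s₀, 4 | Δ when q = 2
  have hnorms₀ : ‖((s₀ : ℤ) : ℚ_[q])‖ ≤ (q:ℝ)^(-1 : ℤ) := by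
    have : ((s₀ : ℤ) : ℚ_[q]) = ((s₀ : ℚ_[q]) - r) + r := by push_cast; ring
    rw [this]
    refine le_trans (Padic.nonarchimedean _ _) (max_le (le_trans hclose0 ?_) hr1)
    exact zpow_le_zpow_right₀ hq1R.le (by omega)
  have hqs₀ : (q : ℤ) ∣ (s₀ : ℤ) := by
    have h1 : ((q:ℤ))^1 ∣ (s₀ : ℤ) := by
      apply (Padic.norm_int_le_pow_iff_dvd _ 1).mp
      simpa using hnorms₀
    simpa using h1
  have hq2Δ : ((q : ℤ))^2 ∣ (t^2 - 4*n) := by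
    apply (Padic.norm_int_le_pow_iff_dvd _ 2).mp
    rw [← hΔq, norm_pow]
    calc ‖r‖^2 = ‖r‖ * ‖r‖ := sq ‖r‖
      _ ≤ (q:ℝ)^(-1:ℤ) * (q:ℝ)^(-1:ℤ) :=
          mul_le_mul hr1 hr1 (norm_nonneg r) (zpow_nonneg (by positivity) _)
      _ = (q:ℝ)^(-(2:ℕ):ℤ) := by rw [← zpow_add₀ (by positivity : (q:ℝ) ≠ 0)]; norm_num
  -- choose s with correct parity
  have hpar : ∃ s : ℤ, 2 ∣ (s - t) ∧ ‖(s : ℚ_[q]) - r‖ ≤ (q:ℝ)^(-4 : ℤ) ∧ (q:ℤ) ∣ s := by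
    by_cases h2 : 2 ∣ ((s₀ : ℤ) - t)
    · exact ⟨(s₀ : ℤ), h2, by exact_mod_cast hclose0, hqs₀⟩
    · rcases eq_or_ne q 2 with hq2 | hq2
      · exfalso
        subst hq2
        have ht2 : (2:ℤ) ∣ t := by
          apply Int.Prime.dvd_pow' (n := t) (k := 2) Nat.prime_two
          have h1 : ((2:ℕ):ℤ)^2 ∣ t^2 - 4*n := hq2Δ
          have h2 : (2:ℤ) ∣ 4*n := ⟨2*n, by ring⟩
          have h3 : (2:ℤ) ∣ t^2 - 4*n := dvd_trans (by norm_num) h1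
          omega
        have hs₀2 : (2:ℤ) ∣ (s₀ : ℤ) := by exact_mod_cast hqs₀
        omega
      · refine ⟨(s₀ : ℤ) + (q:ℤ)^4, ?_, ?_, ?_⟩
        · have hodd : ¬ (2:ℤ) ∣ (q:ℤ)^4 := by
            intro hdvd
            have h2q := Int.Prime.dvd_pow' (n := (q:ℤ)) (k := 4) Nat.prime_two hdvd
            have : (2:ℕ) ∣ q := by exact_mod_cast h2q
            exact hq2 ((Nat.prime_dvd_prime_iff_eq Nat.prime_two hq.out).mp this).symm
          omega
        · have : (((s₀ : ℤ) + (q:ℤ)^4 : ℤ) : ℚ_[q]) - r = ((s₀ : ℚ_[q]) - r) + (q:ℚ_[q])^4 := by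
            push_cast; ring
          rw [this]
          refine le_trans (Padic.nonarchimedean _ _) (max_le hclose0 ?_)
          rw [Padic.norm_p_pow]
          exact zpow_le_zpow_right₀ hq1R.le (by omega)
        · exact Dvd.dvd.add hqs₀ ⟨(q:ℤ)^3, by ring⟩
  obtain ⟨s, hspar, hsclose, hqs⟩ := hpar
  -- norm of s
  have hnorms : ‖(s : ℚ_[q])‖ ≤ (q:ℝ)^(-1 : ℤ) := by
    have : (s : ℚ_[q]) = ((s : ℚ_[q]) - r) + r := by ring
    rw [this]
    refine le_trans (Padic.nonarchimedean _ _) (max_le (le_trans hsclose ?_) hr1)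
    exact zpow_le_zpow_right₀ hq1R.le (by omega)
  -- q^5 divides s^2 - Δ
  have hq5 : ((q:ℤ))^5 ∣ s^2 - (t^2 - 4*n) := by
    apply (Padic.norm_int_le_pow_iff_dvd _ 5).mp
    have hfact : ((s^2 - (t^2 - 4*n) : ℤ) : ℚ_[q]) = ((s:ℚ_[q]) - r) * ((s:ℚ_[q]) + r) := by
      push_cast
      linear_combination hr
    rw [hfact, Padic.padicNormE.mul]
    have h2 : ‖(s:ℚ_[q]) + r‖ ≤ (q:ℝ)^(-1:ℤ) :=
      le_trans (Padic.nonarchimedean _ _) (max_le hnorms hr1)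
    calc ‖(s:ℚ_[q]) - r‖ * ‖(s:ℚ_[q]) + r‖ ≤ (q:ℝ)^(-4:ℤ) * (q:ℝ)^(-1:ℤ) := by
          apply mul_le_mul hsclose h2 (norm_nonneg _) (zpow_nonneg (by positivity) _)
      _ = (q:ℝ)^(-(5:ℕ):ℤ) := by rw [← zpow_add₀ (by positivity : (q:ℝ) ≠ 0)]; norm_num
  -- 4q^2 divides s^2 - Δ
  have hdiv : (4*(q:ℤ)^2) ∣ s^2 - (t^2 - 4*n) := by
    rcases eq_or_ne q 2 with hq2 | hq2
    · subst hq2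
      have : (4*(2:ℤ)^2) ∣ (2:ℤ)^5 := ⟨2, by ring⟩
      exact dvd_trans (by exact_mod_cast this) hq5
    · have h4 : (4:ℤ) ∣ s^2 - (t^2 - 4*n) := by
        obtain ⟨a, ha⟩ := hspar
        have : s^2 - t^2 = 4*(a*(a+t)) := by linear_combination (s + t + 2*a) * ha
        omega
      have hq2d : ((q:ℤ))^2 ∣ s^2 - (t^2 - 4*n) := dvd_trans (pow_dvd_pow _ (by norm_num)) hq5
      have hcop : IsCoprime (4:ℤ) ((q:ℤ)^2) := by
        have h2q : IsCoprime (2:ℤ) (q:ℤ) := by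
          rw [Int.isCoprime_iff_gcd_eq_one]
          have := (Nat.coprime_primes Nat.prime_two hq.out).mpr (fun h => hq2 h.symm)
          simpa [Int.gcd] using this
        have := (h2q.pow : IsCoprime ((2:ℤ)^2) ((q:ℤ)^2))
        norm_num at this
        exact this
      exact hcop.mul_dvd h4 hq2d
  obtain ⟨a, ha⟩ := hspar
  obtain ⟨f, hf⟩ := hdiv
  obtain ⟨e, he⟩ := hqs
  -- the element y = (a + θ)/q is integral
  have hq0 : (q : F) ≠ 0 := Nat.cast_ne_zero.mpr hq.out.ne_zero
  set y : F := ((q : F))⁻¹ * ((a : F) + θ) with hy_def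
  have key : ((a:F) + θ)^2 - (e:F)*(q:F)*((a:F)+θ) + (f:F)*(q:F)^2 = 0 := by
    have h2F : (s:F) - (t:F) = 2*(a:F) := by exact_mod_cast congrArg (fun z : ℤ => (z : F)) ha
    have h3F : (s:F) = (q:F)*(e:F) := by exact_mod_cast congrArg (fun z : ℤ => (z : F)) he
    have h4F : (s:F)^2 - ((t:F)^2 - 4*(n:F)) = 4*(q:F)^2*(f:F) := by
      have := congrArg (fun z : ℤ => (z : F)) hf
      push_cast at this
      linear_combination this
    linear_combination hquad + (-θ - (a:F)/2 + ((s:F)+(t:F))/4) * h2F + (θ + (a:F)) * h3F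
      - (1/4) * h4F
  have hyint : IsIntegral ℤ y := by
    refine ⟨X^2 + (C (-e) * X + C f), ?_, ?_⟩
    · exact monic_X_pow_add (lt_of_le_of_lt degree_linear_le (by norm_num))
    · simp only [eval₂_add, eval₂_mul, eval₂_pow, eval₂_X, eval₂_C]
      simp only [algebraMap_int_eq, eq_intCast]
      push_cast
      rw [hy_def]
      field_simp
      linear_combination key
  obtain ⟨a', b', hy⟩ := (hOF y).mp hyint
  have E : (a:F) + θ = (q:F)*(a':F) + (q:F)*(b':F)*θ := by
    have h1 : (q:F) * y = (a:F) + θ := by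
      rw [hy_def]; field_simp
    rw [hy] at h1
    linear_combination -h1
  by_cases hb : (q:ℤ) * b' = 1
  · have h1 : (q:ℤ) ∣ 1 := ⟨b', hb.symm⟩
    have h2 := Int.le_of_dvd one_pos h1
    have := hq.out.two_le
    omega
  · apply hθ ((((q:ℤ)*a' - a : ℤ) : ℚ) / (((1 - (q:ℤ)*b' : ℤ) : ℤ) : ℚ))
    have hd : (((1 - (q:ℤ)*b' : ℤ) : ℤ) : F) ≠ 0 := by
      rw [Int.cast_ne_zero]
      omega
    rw [map_div₀, map_intCast, map_intCast, eq_div_iff hd]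
    push_cast
    linear_combination E



/-- Optimality of the embedding `Ψ`. For a real quadratic field
`F = ℚ(θ)` with `O_F = ℤ + ℤθ`, coprime `C, N` with all prime factors of `NC` split in
`F`, and the adelic element `ς^{(C)}` built from `ς_q = δ⁻¹[[θ̄,θ],[1,1]]` at split
primes and `[[C,-1],[0,1]]` at primes dividing `C`, the embedding
`Ψ : F → M₂(ℚ)`, `Ψ(θ) = [[Tr θ, -N θ],[1,0]]`, satisfies
`Ψ⁻¹(R_N) ∩ F = O_C = ℤ + C·O_F`, where
`R_N = M₂(ℚ) ∩ ς^{(C)} M₂(Ẑ) (ς^{(C)})⁻¹`; equivalently, `x ∈ O_C` iff at every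
prime the (ς-conjugated) image of `Ψ(x)` is integral. -/
theorem stmt_14
    (F : Type*) [Field F] [Algebra ℚ F]
    (σ : F ≃ₐ[ℚ] F) (hσ : σ ≠ AlgEquiv.refl)
    (θ : F) (T N : ℚ)
    (hT : θ + σ θ = algebraMap ℚ F T)
    (hN : θ * σ θ = algebraMap ℚ F N)
    (hΔ : T ^ 2 - 4 * N ≠ 0)
    (hOF : ∀ y : F, IsIntegral ℤ y ↔ ∃ a b : ℤ, y = (a : F) + (b : F) * θ)
    (C N' : ℕ) (hC : 0 < C) (hN' : 0 < N') (hcop : Nat.Coprime C N')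
    (Ψ : F →ₐ[ℚ] Matrix (Fin 2) (Fin 2) ℚ)
    (hΨ : Ψ θ = !![T, -N; 1, 0])
    -- a chosen square root of the discriminant at each prime dividing N'C
    -- (every prime factor of N'C is split in F)
    (root : ∀ (q : ℕ) (hq : Fact q.Prime), q ∣ N' * C → ℚ_[q])
    (hroot : ∀ (q : ℕ) (hq : Fact q.Prime) (h : q ∣ N' * C),
        (root q hq h) ^ 2 = ((T ^ 2 - 4 * N : ℚ) : ℚ_[q])) :
    ∀ x : F,
      (∃ a b : ℤ, x = (a : F) + (C : F) * (b : F) * θ) ↔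
      ∀ (q : ℕ) (hq : Fact q.Prime),
        (∀ hqC : q ∣ C,
          @isIntegralMat q hq
            ((@splitMat q hq T (root q hq (hqC.mul_left N')) * @cMat q hq C)⁻¹
              * (Ψ x).map (fun t : ℚ => (t : ℚ_[q]))
              * (@splitMat q hq T (root q hq (hqC.mul_left N')) * @cMat q hq C))) ∧
        (¬ q ∣ C →
          (∀ r : ℚ_[q], r ^ 2 = ((T ^ 2 - 4 * N : ℚ) : ℚ_[q]) →
            @isIntegralMat q hq
              ((@splitMat q hq T r)⁻¹
                * (Ψ x).map (fun t : ℚ => (t : ℚ_[q]))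
                * @splitMat q hq T r)) ∧
          ((¬ ∃ r : ℚ_[q], r ^ 2 = ((T ^ 2 - 4 * N : ℚ) : ℚ_[q])) →
            @isIntegralMat q hq ((Ψ x).map (fun t : ℚ => (t : ℚ_[q]))))) := by
  haveI : CharZero F := charZero_of_injective_algebraMap (algebraMap ℚ F).injective
  -- θ is not fixed by σ and is irrational
  have hθσ : σ θ ≠ θ := by
    intro h
    apply hΔ
    have h4 : algebraMap ℚ F (T^2 - 4*N) = (algebraMap ℚ F T)^2 - 4 * algebraMap ℚ F N := by
      rw [map_sub, map_pow, _root_.map_mul, map_ofNat]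
    have h1 : algebraMap ℚ F (T^2 - 4*N) = (θ - σ θ)^2 := by
      rw [h4, ← hT, ← hN]; ring
    rw [h, sub_self] at h1
    have : algebraMap ℚ F (T^2-4*N) = algebraMap ℚ F 0 := by
      rw [h1, map_zero]; ring
    exact (algebraMap ℚ F).injective this
  have hθQ : ∀ c : ℚ, θ ≠ algebraMap ℚ F c := by
    intro c h
    apply hθσ
    rw [h, AlgEquiv.commutes]
  have hlin : ∀ a b : ℚ, algebraMap ℚ F a + algebraMap ℚ F b * θ = 0 → a = 0 ∧ b = 0 := by
    intro a b h
    by_cases hb : b = 0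
    · subst hb
      simp only [map_zero, zero_mul, add_zero] at h
      exact ⟨by simpa using (algebraMap ℚ F).injective (by rw [h, map_zero]), rfl⟩
    · exfalso
      apply hθQ (-a/b)
      rw [map_div₀, map_neg, eq_div_iff (fun h0 => hb ((algebraMap ℚ F).injective
        (by rw [h0, map_zero]) ) )]
      linear_combination h
  -- integrality of θ and σ θ
  have hθint : IsIntegral ℤ θ := (hOF θ).mpr ⟨0, 1, by simp⟩
  have hσθint : IsIntegral ℤ (σ θ) := by
    exact hθint.map (σ.toAlgHom.restrictScalars ℤ)
  -- T and N are integers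
  have hTint : ∃ t : ℤ, T = (t : ℚ) := by
    have h1 : IsIntegral ℤ (algebraMap ℚ F T) := by
      rw [← hT]; exact hθint.add hσθint
    obtain ⟨a, b, hab⟩ := (hOF _).mp h1
    have h0 : algebraMap ℚ F (T - a) + algebraMap ℚ F (-(b:ℚ)) * θ = 0 := by
      rw [map_sub, map_neg]
      have hca : algebraMap ℚ F ((a:ℤ):ℚ) = ((a:ℤ):F) := map_intCast _ _
      have hcb : algebraMap ℚ F ((b:ℤ):ℚ) = ((b:ℤ):F) := map_intCast _ _
      rw [hca, hcb]
      linear_combination hab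
    obtain ⟨h2, h3⟩ := hlin _ _ h0
    exact ⟨a, by linarith [h2]⟩
  have hNint : ∃ n : ℤ, N = (n : ℚ) := by
    have h1 : IsIntegral ℤ (algebraMap ℚ F N) := by
      rw [← hN]; exact hθint.mul hσθint
    obtain ⟨a, b, hab⟩ := (hOF _).mp h1
    have h0 : algebraMap ℚ F (N - a) + algebraMap ℚ F (-(b:ℚ)) * θ = 0 := by
      rw [map_sub, map_neg]
      have hca : algebraMap ℚ F ((a:ℤ):ℚ) = ((a:ℤ):F) := map_intCast _ _
      have hcb : algebraMap ℚ F ((b:ℤ):ℚ) = ((b:ℤ):F) := map_intCast _ _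
      rw [hca, hcb]
      linear_combination hab
    obtain ⟨h2, h3⟩ := hlin _ _ h0
    exact ⟨a, by linarith [h2]⟩
  obtain ⟨t, ht⟩ := hTint
  obtain ⟨n, hn⟩ := hNint
  have hΔtn : t^2 - 4*n ≠ 0 := by
    intro h
    apply hΔ
    rw [ht, hn]
    exact_mod_cast congrArg (fun z : ℤ => (z : ℚ)) h
  have hquadQ : θ^2 - algebraMap ℚ F T * θ + algebraMap ℚ F N = 0 := by
    rw [← hT, ← hN]; ring
  have hquadZ : θ^2 - (t : F)*θ + (n : F) = 0 := by
    have h1 : algebraMap ℚ F T = (t : F) := by rw [ht]; exact map_intCast _ _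
    have h2 : algebraMap ℚ F N = (n : F) := by rw [hn]; exact map_intCast _ _
    rw [← h1, ← h2]; exact hquadQ
  -- decomposition of any x through Ψ
  have hinj : Function.Injective Ψ := by
    intro x y h
    exact sub_eq_zero.mp (by
      by_contra h0
      have h1 : Ψ (x - y) = 0 := by rw [map_sub, h, sub_self]
      have h2 : Ψ ((x-y)⁻¹ * (x-y)) = 0 := by rw [_root_.map_mul, h1, mul_zero]
      rw [inv_mul_cancel₀ h0, _root_.map_one] at h2
      exact one_ne_zero h2)
  have hdecomp : ∀ x : F, ∃ u v : ℚ, x = algebraMap ℚ F u + algebraMap ℚ F v * θ ∧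
      Ψ x = !![u + v*T, -(v*N); v, u] := by
    intro x
    have hcomm : Ψ x * Ψ θ = Ψ θ * Ψ x := by rw [← _root_.map_mul, ← _root_.map_mul, mul_comm]
    rw [hΨ] at hcomm
    set A := Ψ x with hA
    have e00 : A 0 0 = A 1 1 + A 1 0 * T := by
      have h1 := congrFun (congrFun hcomm 1) 0
      simp [Matrix.mul_apply, Fin.sum_univ_two] at h1
      linarith
    have e01 : A 0 1 = -(A 1 0 * N) := by
      have h1 := congrFun (congrFun hcomm 1) 1
      simp [Matrix.mul_apply, Fin.sum_univ_two] at h1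
      linarith
    have hAform : A = !![A 1 1 + A 1 0 * T, -(A 1 0 * N); A 1 0, A 1 1] := by
      ext i j
      fin_cases i <;> fin_cases j <;> simp [e00, e01]
    refine ⟨A 1 1, A 1 0, ?_, hAform⟩
    apply hinj
    rw [map_add, _root_.map_mul, AlgHom.commutes, AlgHom.commutes, hΨ, ← hA, hAform]
    ext i j
    fin_cases i <;> fin_cases j <;>
      simp [Matrix.algebraMap_matrix_apply, Matrix.mul_apply, Fin.sum_univ_two] <;> ring
  intro x
  obtain ⟨u, v, hx, hΨx⟩ := hdecomp x
  constructor
  · -- forward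
    rintro ⟨a, b, hab⟩
    have hcast : algebraMap ℚ F ((a:ℤ):ℚ) + algebraMap ℚ F ((C:ℚ)*((b:ℤ):ℚ)) * θ
        = (a : F) + (C : F) * (b : F) * θ := by
      rw [map_intCast, _root_.map_mul, map_natCast, map_intCast]
    have h0 : algebraMap ℚ F (u - a) + algebraMap ℚ F (v - (C:ℚ)*b) * θ = 0 := by
      rw [map_sub, map_sub, sub_mul]
      rw [hx] at hab
      linear_combination hab - hcast
    obtain ⟨h1, h2⟩ := hlin _ _ h0
    have hua : u = ((a:ℤ):ℚ) := by linarith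
    have hvb : v = (C:ℚ)*((b:ℤ):ℚ) := by linarith
    intro q hq
    have hTq : ((T:ℚ) : ℚ_[q]) = ((t:ℤ) : ℚ_[q]) := by rw [ht]; push_cast; ring
    have hNq : ((N:ℚ) : ℚ_[q]) = ((n:ℤ) : ℚ_[q]) := by rw [hn]; push_cast; ring
    have hTnorm : ‖((T:ℚ) : ℚ_[q])‖ ≤ 1 := by rw [hTq]; exact Padic.norm_int_le_one t
    have hNnorm : ‖((N:ℚ) : ℚ_[q])‖ ≤ 1 := by rw [hNq]; exact Padic.norm_int_le_one n
    have hmapx : (Ψ x).map (fun s : ℚ => (s : ℚ_[q])) =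
        !![(u:ℚ_[q]) + (v:ℚ_[q])*(T:ℚ_[q]), -((v:ℚ_[q])*(N:ℚ_[q])); (v:ℚ_[q]), (u:ℚ_[q])] := by
      rw [hΨx, map_fin_two]
      ext i j
      fin_cases i <;> fin_cases j <;> simp <;> push_cast <;> ring
    have hroot_facts : ∀ r : ℚ_[q], r^2 = ((T^2-4*N : ℚ) : ℚ_[q]) →
        r ≠ 0 ∧ r^2 = ((T:ℚ_[q]))^2 - 4*(N:ℚ_[q]) ∧ ‖r‖ ≤ 1 := by
      intro r hr
      have h2 : r^2 = ((T:ℚ_[q]))^2 - 4*(N:ℚ_[q]) := by rw [hr]; push_cast; ring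
      refine ⟨?_, h2, ?_⟩
      · intro h0
        apply hΔ
        apply Rat.cast_injective (α := ℚ_[q])
        rw [Rat.cast_zero, ← hr, h0]
        ring
      · apply root_le_one (x := ((T^2-4*N : ℚ) : ℚ_[q])) ?_ hr
        rw [show ((T^2-4*N : ℚ) : ℚ_[q]) = (((t^2-4*n : ℤ)) : ℚ_[q]) by rw [ht, hn]; push_cast; ring]
        exact Padic.norm_int_le_one _
    have hCq : (C : ℚ_[q]) ≠ 0 := Nat.cast_ne_zero.mpr hC.ne'
    have hvq : (v:ℚ_[q]) = (C : ℚ_[q]) * ((b:ℤ) : ℚ_[q]) := by rw [hvb]; push_cast; ring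
    have hunorm : ‖(u:ℚ_[q])‖ ≤ 1 := by
      rw [show ((u:ℚ):ℚ_[q]) = ((a:ℤ):ℚ_[q]) by rw [hua]; push_cast; ring]
      exact Padic.norm_int_le_one a
    have hCnorm : ‖(C : ℚ_[q])‖ ≤ 1 := by
      rw [show ((C:ℕ):ℚ_[q]) = (((C:ℕ):ℤ):ℚ_[q]) by push_cast; ring]
      exact Padic.norm_int_le_one _
    have hvnorm : ‖(v:ℚ_[q])‖ ≤ 1 := by
      rw [hvq, Padic.padicNormE.mul]
      exact mul_le_one₀ hCnorm (norm_nonneg _) (Padic.norm_int_le_one b)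
    constructor
    · intro hqC
      obtain ⟨hrne, hr2, hrle⟩ := hroot_facts (root q hq (hqC.mul_left N')) (hroot q hq _)
      rw [hmapx, conj_c_eq T C (root q hq (hqC.mul_left N')) (u:ℚ_[q]) (v:ℚ_[q]) (N:ℚ_[q]) hrne hCq hr2]
      rw [isIntegralMat_explicit]
      have hθp : ‖((T:ℚ_[q]) + root q hq (hqC.mul_left N'))/2‖ ≤ 1 := theta_plus_norm hTnorm hNnorm hr2
      have hθm : ‖((T:ℚ_[q]) - root q hq (hqC.mul_left N'))/2‖ ≤ 1 := theta_minus_norm hTnorm hNnorm hr2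
      refine ⟨norm_add_mul_le_one hunorm hvnorm hθp, ?_, by simp,
        norm_add_mul_le_one hunorm hvnorm hθm⟩
      have hsimp : -((v:ℚ_[q]) * root q hq (hqC.mul_left N'))/(C:ℚ_[q]) =
          -(((b:ℤ):ℚ_[q]) * root q hq (hqC.mul_left N')) := by
        rw [hvq]
        field_simp
      rw [hsimp, norm_neg, Padic.padicNormE.mul]
      exact mul_le_one₀ (Padic.norm_int_le_one b) (norm_nonneg _) hrle
    · intro hqnC
      constructor
      · intro r hr
        obtain ⟨hrne, hr2, hrle⟩ := hroot_facts r hr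
        rw [hmapx, conj_split_eq T r (u:ℚ_[q]) (v:ℚ_[q]) (N:ℚ_[q]) hrne hr2, isIntegralMat_explicit]
        have hθp := theta_plus_norm hTnorm hNnorm hr2
        have hθm := theta_minus_norm hTnorm hNnorm hr2
        exact ⟨norm_add_mul_le_one hunorm hvnorm hθp, by simp, by simp,
          norm_add_mul_le_one hunorm hvnorm hθm⟩
      · intro _
        rw [hmapx, isIntegralMat_explicit]
        refine ⟨norm_add_mul_le_one hunorm hvnorm hTnorm, ?_, hvnorm, hunorm⟩
        rw [norm_neg, Padic.padicNormE.mul]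
        exact mul_le_one₀ hvnorm (norm_nonneg _) hNnorm
  · -- backward
    intro h
    have key : ∀ (q : ℕ) (hq : Fact q.Prime),
        ‖(u:ℚ_[q])‖ ≤ 1 ∧ ‖((v/(C:ℚ) : ℚ) : ℚ_[q])‖ ≤ 1 := by
      intro q hq
      have hTq : ((T:ℚ) : ℚ_[q]) = ((t:ℤ) : ℚ_[q]) := by rw [ht]; push_cast; ring
      have hNq : ((N:ℚ) : ℚ_[q]) = ((n:ℤ) : ℚ_[q]) := by rw [hn]; push_cast; ring
      have hTnorm : ‖((T:ℚ) : ℚ_[q])‖ ≤ 1 := by rw [hTq]; exact Padic.norm_int_le_one t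
      have hNnorm : ‖((N:ℚ) : ℚ_[q])‖ ≤ 1 := by rw [hNq]; exact Padic.norm_int_le_one n
      have hmapx : (Ψ x).map (fun s : ℚ => (s : ℚ_[q])) =
          !![(u:ℚ_[q]) + (v:ℚ_[q])*(T:ℚ_[q]), -((v:ℚ_[q])*(N:ℚ_[q])); (v:ℚ_[q]), (u:ℚ_[q])] := by
        rw [hΨx, map_fin_two]
        ext i j
        fin_cases i <;> fin_cases j <;> simp <;> push_cast <;> ring
      have hroot_facts : ∀ r : ℚ_[q], r^2 = ((T^2-4*N : ℚ) : ℚ_[q]) →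
          r ≠ 0 ∧ r^2 = ((T:ℚ_[q]))^2 - 4*(N:ℚ_[q]) ∧ ‖r‖ = 1 := by
        intro r hr
        have h2 : r^2 = ((T:ℚ_[q]))^2 - 4*(N:ℚ_[q]) := by rw [hr]; push_cast; ring
        refine ⟨?_, h2, ?_⟩
        · intro h0
          apply hΔ
          apply Rat.cast_injective (α := ℚ_[q])
          rw [Rat.cast_zero, ← hr, h0]
          ring
        · exact root_norm_eq_one θ t n hθQ hquadZ hOF hΔtn q r
            (by rw [h2, hTq, hNq])
      have hCq : (C : ℚ_[q]) ≠ 0 := Nat.cast_ne_zero.mpr hC.ne'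
      have hvdivcast : ((v/(C:ℚ) : ℚ) : ℚ_[q]) = (v:ℚ_[q])/(C:ℚ_[q]) := by push_cast; ring
      obtain ⟨h1, h2⟩ := h q hq
      have main : ∀ r : ℚ_[q], r ≠ 0 → r^2 = ((T:ℚ_[q]))^2 - 4*(N:ℚ_[q]) → ‖r‖ = 1 →
          ‖(u:ℚ_[q]) + (v:ℚ_[q])*(((T:ℚ_[q])+r)/2)‖ ≤ 1 →
          ‖(u:ℚ_[q]) + (v:ℚ_[q])*(((T:ℚ_[q])-r)/2)‖ ≤ 1 →
          ‖(u:ℚ_[q])‖ ≤ 1 ∧ ‖(v:ℚ_[q])‖ ≤ 1 := by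
        intro r hrne hr2 hr1 hα hβ
        have hθp := theta_plus_norm hTnorm hNnorm hr2
        have hvnorm : ‖(v:ℚ_[q])‖ ≤ 1 := by
          have hh : ‖(v:ℚ_[q]) * r‖ ≤ 1 := by
            have hvr : (v:ℚ_[q]) * r =
                ((u:ℚ_[q]) + (v:ℚ_[q])*(((T:ℚ_[q])+r)/2)) -
                ((u:ℚ_[q]) + (v:ℚ_[q])*(((T:ℚ_[q])-r)/2)) := by ring
            rw [hvr]
            exact le_trans (norm_sub_le_max _ _) (max_le hα hβ)
          rwa [Padic.padicNormE.mul, hr1, mul_one] at hh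
        refine ⟨?_, hvnorm⟩
        have hueq : (u:ℚ_[q]) = ((u:ℚ_[q]) + (v:ℚ_[q])*(((T:ℚ_[q])+r)/2)) +
            (-((v:ℚ_[q])) * (((T:ℚ_[q])+r)/2)) := by ring
        rw [hueq]
        refine le_trans (Padic.nonarchimedean _ _) (max_le hα ?_)
        rw [Padic.padicNormE.mul, norm_neg]
        exact mul_le_one₀ hvnorm (norm_nonneg _) hθp
      by_cases hqC : q ∣ C
      · specialize h1 hqC
        obtain ⟨hrne, hr2, hr1⟩ := hroot_facts (root q hq (hqC.mul_left N')) (hroot q hq _)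
        rw [hmapx, conj_c_eq T C (root q hq (hqC.mul_left N')) (u:ℚ_[q]) (v:ℚ_[q]) (N:ℚ_[q])
          hrne hCq hr2, isIntegralMat_explicit] at h1
        obtain ⟨hα, hoff, -, hβ⟩ := h1
        obtain ⟨hu1, hv1⟩ := main _ hrne hr2 hr1 hα hβ
        refine ⟨hu1, ?_⟩
        rw [hvdivcast]
        have hrw : (v:ℚ_[q])/(C:ℚ_[q]) =
            -(-((v:ℚ_[q]) * root q hq (hqC.mul_left N'))/(C:ℚ_[q]) / (root q hq (hqC.mul_left N'))) := by
          field_simp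
        rw [hrw, norm_neg, norm_div, hr1, div_one]
        exact hoff
      · obtain ⟨h2a, h2b⟩ := h2 hqC
        have hCnorm : ‖(C:ℚ_[q])‖ = 1 := by
          have hle : ‖(((C:ℕ):ℤ):ℚ_[q])‖ ≤ 1 := Padic.norm_int_le_one _
          have hnlt : ¬ ‖(((C:ℕ):ℤ):ℚ_[q])‖ < 1 := by
            rw [Padic.norm_intCast_lt_one_iff]
            exact_mod_cast hqC
          have heq : (((C:ℕ):ℤ):ℚ_[q]) = ((C:ℕ):ℚ_[q]) := by push_cast; ring
          rw [heq] at hle hnlt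
          linarith [lt_or_ge ‖((C:ℕ):ℚ_[q])‖ 1]
        by_cases hex : ∃ r : ℚ_[q], r^2 = ((T^2-4*N : ℚ) : ℚ_[q])
        · obtain ⟨r, hr⟩ := hex
          specialize h2a r hr
          obtain ⟨hrne, hr2, hr1⟩ := hroot_facts r hr
          rw [hmapx, conj_split_eq T r (u:ℚ_[q]) (v:ℚ_[q]) (N:ℚ_[q]) hrne hr2,
            isIntegralMat_explicit] at h2a
          obtain ⟨hα, -, -, hβ⟩ := h2a
          obtain ⟨hu1, hv1⟩ := main _ hrne hr2 hr1 hα hβ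
          exact ⟨hu1, by rw [hvdivcast, norm_div, hCnorm, div_one]; exact hv1⟩
        · specialize h2b hex
          rw [hmapx, isIntegralMat_explicit] at h2b
          obtain ⟨-, -, hv1, hu1⟩ := h2b
          exact ⟨hu1, by rw [hvdivcast, norm_div, hCnorm, div_one]; exact hv1⟩
    obtain ⟨a, ha⟩ := rat_is_int_of_norms u (fun q hq => (key q hq).1)
    obtain ⟨b, hb⟩ := rat_is_int_of_norms (v/(C:ℚ)) (fun q hq => (key q hq).2)
    refine ⟨a, b, ?_⟩
    have hC0 : (C:ℚ) ≠ 0 := Nat.cast_ne_zero.mpr hC.ne'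
    have hv : v = (C:ℚ) * (b:ℚ) := by
      rw [← hb]
      field_simp
    rw [hx, ha, hv]
    rw [map_intCast, _root_.map_mul, map_natCast, map_intCast]



end
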